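/- Let (λ_j)_{j≥1} be a nondecreasing sequence of reals with λ₁ ≥ 1, let α ∈ (0,1), L ≥ 0, and N ≥ 1 with λ_N < λ_{N+1}. Set G = (λ_{N+1}^{1+α} − λ_N^{1+α})/(λ_{N+1}^α + λ_N^α) and γ = λ_N^α·λ_{N+1}^α·(λ_{N+1} + λ_N)/(λ_{N+1}^α + λ_N^α), and assume G > L; set μ = G − L. Then for every v ∈ ℓ² with Σ_j λ_j v_j² < ∞ and every w ∈ ℓ² with ‖w‖ ≤ L‖v‖, writing p = P_N v and q = Q_N v, one has: γ·(Σ_{j>N} λ_j^{−α} v_j² − Σ_{j≤N} λ_j^{−α} v_j²) − (Σ_{j>N} λ_j v_j² − Σ_{j≤N} λ_j v_j²) + ⟨w, p − q⟩ ≤ −μ·Σ_j λ_j^{−α} v_j². -/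

import Mathlib

noncomputable section

/-- `Plow N v` keeps the entries with index `j ≤ N` (the projector `P_N`). -/
def Plow (N : ℕ+) (v : ℕ+ → ℝ) : ℕ+ → ℝ := fun j => if j ≤ N then v j else 0

/-- `Qhigh N v` keeps the entries with index `j > N` (the projector `Q_N`). -/
def Qhigh (N : ℕ+) (v : ℕ+ → ℝ) : ℕ+ → ℝ := fun j => if j ≤ N then 0 else v j

/-- `PkOp lam k N v` keeps exactly the entries with `λ_j < λ_N − k`. -/
def PkOp (lam : ℕ+ → ℝ) (k : ℝ) (N : ℕ+) (v : ℕ+ → ℝ) : ℕ+ → ℝ :=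
  fun j => if lam j < lam N - k then v j else 0

/-- `RkOp lam k N v` keeps exactly the entries with `λ_N − k ≤ λ_j ≤ λ_N + k`. -/
def RkOp (lam : ℕ+ → ℝ) (k : ℝ) (N : ℕ+) (v : ℕ+ → ℝ) : ℕ+ → ℝ :=
  fun j => if lam N - k ≤ lam j ∧ lam j ≤ lam N + k then v j else 0

/-- `QkOp lam k N v` keeps exactly the entries with `λ_j > λ_N + k`. -/
def QkOp (lam : ℕ+ → ℝ) (k : ℝ) (N : ℕ+) (v : ℕ+ → ℝ) : ℕ+ → ℝ :=
  fun j => if lam N + k < lam j then v j else 0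

/-- Squared `ℓ²` norm. -/
def nsq (v : ℕ+ → ℝ) : ℝ := ∑' j, (v j) ^ 2

/-- Squared norm `‖A^s v‖² = Σ_j λ_j^{2s} v_j²` of the diagonal operator power. -/
def asq (lam : ℕ+ → ℝ) (s : ℝ) (v : ℕ+ → ℝ) : ℝ := ∑' j, lam j ^ (2 * s) * (v j) ^ 2

set_option maxHeartbeats 1600000 in
/-- Theorem 4.1 of the paper (pointwise form): the sharp spectral gap condition
implies the strong cone condition in `ℍ^{−α}`. -/
theorem spectral_gap_strong_cone
    (lam : ℕ+ → ℝ) (hmono : Monotone lam) (hlam1 : 1 ≤ lam 1)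
    (α : ℝ) (hα0 : 0 < α) (hα1 : α < 1) (L : ℝ) (hL : 0 ≤ L)
    (N : ℕ+) (hNgap : lam N < lam (N + 1))
    (G γ μ : ℝ)
    (hG : G = (lam (N + 1) ^ (1 + α) - lam N ^ (1 + α)) / (lam (N + 1) ^ α + lam N ^ α))
    (hγ : γ = lam N ^ α * lam (N + 1) ^ α * (lam (N + 1) + lam N) /
      (lam (N + 1) ^ α + lam N ^ α))
    (hGL : G > L) (hμ : μ = G - L)
    (v w : ℕ+ → ℝ)
    (hv2 : Summable fun j => (v j) ^ 2)
    (hv1 : Summable fun j => lam j * (v j) ^ 2)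
    (hw2 : Summable fun j => (w j) ^ 2)
    (hwv : (∑' j, (w j) ^ 2) ≤ L ^ 2 * ∑' j, (v j) ^ 2) :
    γ * ((∑' j, lam j ^ (-α) * (Qhigh N v j) ^ 2) -
          (∑' j, lam j ^ (-α) * (Plow N v j) ^ 2)) -
        ((∑' j, lam j * (Qhigh N v j) ^ 2) - (∑' j, lam j * (Plow N v j) ^ 2)) +
        (∑' j, w j * (Plow N v j - Qhigh N v j)) ≤
      -μ * ∑' j, lam j ^ (-α) * (v j) ^ 2 := by
    -- basic positivity facts
  have hlamj : ∀ j : ℕ+, 1 ≤ lam j := fun j => hlam1.trans (hmono j.one_le)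
  have hlamj0 : ∀ j : ℕ+, (0:ℝ) < lam j := fun j => lt_of_lt_of_le one_pos (hlamj j)
  have ha0 : (0:ℝ) < lam N := hlamj0 N
  have hb0 : (0:ℝ) < lam (N+1) := hlamj0 (N+1)
  have hA0 : (0:ℝ) < lam N ^ α := Real.rpow_pos_of_pos ha0 α
  have hB0 : (0:ℝ) < lam (N+1) ^ α := Real.rpow_pos_of_pos hb0 α
  have hden : lam (N+1) ^ α + lam N ^ α ≠ 0 := by positivity
  have hγ0 : 0 ≤ γ := by rw [hγ]; positivity
  have hGL' : L ≤ G := hGL.le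
  -- the two key spectral identities
  have hid1 : γ * lam N ^ (-α) = G + lam N := by
    rw [hγ, hG, Real.rpow_neg ha0.le,
      show (1:ℝ) + α = α + 1 by ring, Real.rpow_add hb0, Real.rpow_add ha0,
      Real.rpow_one, Real.rpow_one]
    field_simp
    ring
  have hid2 : γ * lam (N+1) ^ (-α) = lam (N+1) - G := by
    rw [hγ, hG, Real.rpow_neg hb0.le,
      show (1:ℝ) + α = α + 1 by ring, Real.rpow_add hb0, Real.rpow_add ha0,
      Real.rpow_one, Real.rpow_one]
    field_simp
    ring
  -- pointwise key inequality on coefficients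
  have key : ∀ j : ℕ+,
      (if j ≤ N then lam j - γ * lam j ^ (-α) else γ * lam j ^ (-α) - lam j)
        + μ * lam j ^ (-α) + L ≤ 0 := by
    intro j
    have hx1 : 1 ≤ lam j := hlamj j
    have hx0 : 0 < lam j := hlamj0 j
    have hxα1 : lam j ^ (-α) ≤ 1 :=
      Real.rpow_le_one_of_one_le_of_nonpos hx1 (by linarith)
    have hf2 : (G - L) * lam j ^ (-α) ≤ (G - L) * 1 :=
      mul_le_mul_of_nonneg_left hxα1 (sub_nonneg.mpr hGL')
    subst hμ
    by_cases hjN : j ≤ N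
    · simp only [if_pos hjN]
      have hxa : lam j ≤ lam N := hmono hjN
      have haα : lam N ^ (-α) ≤ lam j ^ (-α) :=
        Real.rpow_le_rpow_of_nonpos hx0 hxa (by linarith)
      have hf1 : γ * lam N ^ (-α) ≤ γ * lam j ^ (-α) :=
        mul_le_mul_of_nonneg_left haα hγ0
      linarith [hf1, hf2, hid1, hxa]
    · simp only [if_neg hjN]
      have hNj : N + 1 ≤ j := PNat.add_one_le_iff.mpr (lt_of_not_ge hjN)
      have hbx : lam (N+1) ≤ lam j := hmono hNj
      have hbα : lam j ^ (-α) ≤ lam (N+1) ^ (-α) :=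
        Real.rpow_le_rpow_of_nonpos hb0 hbx (by linarith)
      have hf1 : γ * lam j ^ (-α) ≤ γ * lam (N+1) ^ (-α) :=
        mul_le_mul_of_nonneg_left hbα hγ0
      linarith [hf1, hf2, hid2, hbx]
  -- pointwise facts about the projectors
  have hQle : ∀ j : ℕ+, (Qhigh N v j) ^ 2 ≤ (v j) ^ 2 := by
    intro j; simp only [Qhigh]; split
    · simpa using sq_nonneg (v j)
    · exact le_rfl
  have hPle : ∀ j : ℕ+, (Plow N v j) ^ 2 ≤ (v j) ^ 2 := by
    intro j; simp only [Plow]; split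
    · exact le_rfl
    · simpa using sq_nonneg (v j)
  have hxα1 : ∀ j : ℕ+, lam j ^ (-α) ≤ 1 := fun j =>
    Real.rpow_le_one_of_one_le_of_nonpos (hlamj j) (by linarith)
  have hxα0 : ∀ j : ℕ+, (0:ℝ) ≤ lam j ^ (-α) := fun j =>
    Real.rpow_nonneg (hlamj0 j).le _
  -- summability facts
  have hs1 : Summable fun j => lam j ^ (-α) * (Qhigh N v j) ^ 2 := by
    refine Summable.of_nonneg_of_le (fun j => mul_nonneg (hxα0 j) (sq_nonneg _)) (fun j => ?_) hv2
    calc lam j ^ (-α) * (Qhigh N v j) ^ 2 ≤ (Qhigh N v j) ^ 2 :=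
          mul_le_of_le_one_left (sq_nonneg _) (hxα1 j)
      _ ≤ (v j) ^ 2 := hQle j
  have hs2 : Summable fun j => lam j ^ (-α) * (Plow N v j) ^ 2 := by
    refine Summable.of_nonneg_of_le (fun j => mul_nonneg (hxα0 j) (sq_nonneg _)) (fun j => ?_) hv2
    calc lam j ^ (-α) * (Plow N v j) ^ 2 ≤ (Plow N v j) ^ 2 :=
          mul_le_of_le_one_left (sq_nonneg _) (hxα1 j)
      _ ≤ (v j) ^ 2 := hPle j
  have hs3 : Summable fun j => lam j * (Qhigh N v j) ^ 2 := by
    refine Summable.of_nonneg_of_le (fun j => mul_nonneg (hlamj0 j).le (sq_nonneg _)) (fun j => ?_) hv1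
    exact mul_le_mul_of_nonneg_left (hQle j) (hlamj0 j).le
  have hs4 : Summable fun j => lam j * (Plow N v j) ^ 2 := by
    refine Summable.of_nonneg_of_le (fun j => mul_nonneg (hlamj0 j).le (sq_nonneg _)) (fun j => ?_) hv1
    exact mul_le_mul_of_nonneg_left (hPle j) (hlamj0 j).le
  have hs6 : Summable fun j => lam j ^ (-α) * (v j) ^ 2 := by
    refine Summable.of_nonneg_of_le (fun j => mul_nonneg (hxα0 j) (sq_nonneg _)) (fun j => ?_) hv2
    exact mul_le_of_le_one_left (sq_nonneg _) (hxα1 j)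
  have hu2 : ∀ j : ℕ+, (Plow N v j - Qhigh N v j) ^ 2 = (v j) ^ 2 := by
    intro j; simp only [Plow, Qhigh]; split <;> ring
  have hs5 : Summable fun j => w j * (Plow N v j - Qhigh N v j) := by
    apply Summable.of_abs
    refine Summable.of_nonneg_of_le (fun j => abs_nonneg _) (fun j => ?_)
      (((hw2.add hv2)).div_const 2)
    rw [abs_mul]
    have h1 := hu2 j
    have h2 := sq_abs (w j)
    have h3 := sq_abs (Plow N v j - Qhigh N v j)
    nlinarith [sq_nonneg (|w j| - |Plow N v j - Qhigh N v j|), abs_nonneg (w j),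
      abs_nonneg (Plow N v j - Qhigh N v j)]
  -- bound on the inner product term
  have hW : (∑' j, w j * (Plow N v j - Qhigh N v j)) ≤ L * ∑' j, (v j) ^ 2 := by
    rcases eq_or_lt_of_le hL with hL0 | hLpos
    · -- L = 0 : w = 0
      have hw0 : ∀ j, w j = 0 := by
        intro j
        have h1 : (w j) ^ 2 ≤ ∑' i, (w i) ^ 2 :=
          Summable.le_tsum hw2 j (fun i _ => sq_nonneg _)
        have h2 : (∑' i, (w i) ^ 2) ≤ 0 := by
          rw [← hL0] at hwv; simpa using hwv
        have := sq_nonneg (w j)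
        have : (w j) ^ 2 = 0 := le_antisymm (h1.trans h2) this
        exact (pow_eq_zero_iff two_ne_zero).mp this
      have : (∑' j, w j * (Plow N v j - Qhigh N v j)) = 0 := by
        have : (fun j => w j * (Plow N v j - Qhigh N v j)) = fun _ => (0:ℝ) := by
          funext j; rw [hw0 j]; ring
        rw [this, tsum_zero]
      rw [this, ← hL0]
      simp
    · -- L > 0
      have hbndsum : Summable fun j => (w j) ^ 2 / (2 * L) + L * (v j) ^ 2 / 2 :=
        (hw2.div_const (2 * L)).add ((hv2.mul_left L).div_const 2)
      have hpt : ∀ j : ℕ+, w j * (Plow N v j - Qhigh N v j) ≤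
          (w j) ^ 2 / (2 * L) + L * (v j) ^ 2 / 2 := by
        intro j
        set u := Plow N v j - Qhigh N v j with hu
        have h1 : (0:ℝ) ≤ (w j - L * u) ^ 2 / (2 * L) := by positivity
        have h3 : u ^ 2 = (v j) ^ 2 := hu2 j
        have h2 : (w j - L * u) ^ 2 / (2 * L)
            = (w j) ^ 2 / (2 * L) - w j * u + L * (v j) ^ 2 / 2 := by
          rw [← h3]
          field_simp
          ring
        linarith [h1, h2]
      have h4 : (∑' j, w j * (Plow N v j - Qhigh N v j)) ≤
          ∑' j, ((w j) ^ 2 / (2 * L) + L * (v j) ^ 2 / 2) :=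
        Summable.tsum_le_tsum hpt hs5 hbndsum
      have h5 : (∑' j, ((w j) ^ 2 / (2 * L) + L * (v j) ^ 2 / 2))
          = (∑' j, (w j) ^ 2) / (2 * L) + L * (∑' j, (v j) ^ 2) / 2 := by
        rw [Summable.tsum_add (hw2.div_const (2 * L)) ((hv2.mul_left L).div_const 2),
          tsum_div_const, tsum_div_const, tsum_mul_left]
      have h6 : (∑' j, (w j) ^ 2) / (2 * L) ≤ L * (∑' j, (v j) ^ 2) / 2 := by
        rw [div_le_div_iff₀ (by positivity) two_pos]
        nlinarith [hwv]
      calc (∑' j, w j * (Plow N v j - Qhigh N v j))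
          ≤ (∑' j, (w j) ^ 2) / (2 * L) + L * (∑' j, (v j) ^ 2) / 2 := by
            rw [← h5]; exact h4
        _ ≤ L * (∑' j, (v j) ^ 2) / 2 + L * (∑' j, (v j) ^ 2) / 2 := by linarith
        _ = L * ∑' j, (v j) ^ 2 := by ring
  -- the combined coefficient series
  set F : ℕ+ → ℝ := fun j =>
    (if j ≤ N then lam j - γ * lam j ^ (-α) else γ * lam j ^ (-α) - lam j) * (v j) ^ 2
    with hFdef
  have hFpt : ∀ j : ℕ+,
      γ * (lam j ^ (-α) * (Qhigh N v j) ^ 2) - γ * (lam j ^ (-α) * (Plow N v j) ^ 2)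
        - lam j * (Qhigh N v j) ^ 2 + lam j * (Plow N v j) ^ 2 = F j := by
    intro j; simp only [hFdef, Plow, Qhigh]; split <;> ring
  have hsF : Summable F :=
    ((((hs1.mul_left γ).sub (hs2.mul_left γ)).sub hs3).add hs4).congr hFpt
  have hEq : γ * ((∑' j, lam j ^ (-α) * (Qhigh N v j) ^ 2) -
        (∑' j, lam j ^ (-α) * (Plow N v j) ^ 2)) -
      ((∑' j, lam j * (Qhigh N v j) ^ 2) - (∑' j, lam j * (Plow N v j) ^ 2))
      = ∑' j, F j := by
    rw [← tsum_congr hFpt,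
      Summable.tsum_add (((hs1.mul_left γ).sub (hs2.mul_left γ)).sub hs3) hs4,
      Summable.tsum_sub ((hs1.mul_left γ).sub (hs2.mul_left γ)) hs3,
      Summable.tsum_sub (hs1.mul_left γ) (hs2.mul_left γ), tsum_mul_left, tsum_mul_left]
    ring
  -- final combination
  have hfinal : (∑' j, F j) + L * (∑' j, (v j) ^ 2)
      + μ * (∑' j, lam j ^ (-α) * (v j) ^ 2) ≤ 0 := by
    have hcomb : (∑' j, F j) + L * (∑' j, (v j) ^ 2)
        + μ * (∑' j, lam j ^ (-α) * (v j) ^ 2)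
        = ∑' j, (F j + L * (v j) ^ 2 + μ * (lam j ^ (-α) * (v j) ^ 2)) := by
      rw [Summable.tsum_add (hsF.add (hv2.mul_left L)) (hs6.mul_left μ),
        Summable.tsum_add hsF (hv2.mul_left L), tsum_mul_left, tsum_mul_left]
    rw [hcomb]
    apply tsum_nonpos
    intro j
    have hk := key j
    have : F j + L * (v j) ^ 2 + μ * (lam j ^ (-α) * (v j) ^ 2)
        = ((if j ≤ N then lam j - γ * lam j ^ (-α) else γ * lam j ^ (-α) - lam j)
            + μ * lam j ^ (-α) + L) * (v j) ^ 2 := by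
      simp only [hFdef]; ring
    rw [this]
    exact mul_nonpos_of_nonpos_of_nonneg hk (sq_nonneg _)
  rw [hEq]
  linarith [hfinal, hW]
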